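/- arXiv:2011.01783 — 2 statements merged into one kernel-verified Lean document; each statement's English description precedes it below -/
import Mathlib

section
/- Let H₀ = λI_d with λ ≥ 1, and H_T = H₀ + Σ_{t=1}^T x_t c_t c_tᵀ where x_t ∈ {0,1} and ‖c_t‖₂ ≤ L. Then Σ_{t=1}^T x_t · min{‖c_t‖²_{H_{t-1}^{-1}}, 1} ≤ 2(log det(H_T) - log det(H₀)). -/
open Matrix

private lemma min_le_two_log {u : ℝ} (hu : 0 ≤ u) : min u 1 ≤ 2 * Real.log (1 + u) := by
  set m := min u 1 with hm
  have hm0 : 0 ≤ m := le_min hu one_pos.le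
  have hm1 : m ≤ 1 := min_le_right _ _
  have hmu : m ≤ u := min_le_left _ _
  have hx : (0:ℝ) < 1 - m/2 := by linarith
  have he : 1 - m/2 ≤ Real.exp (-(m/2)) := by
    have := Real.add_one_le_exp (-(m/2)); linarith
  have h2 : Real.exp (m/2) ≤ 1/(1-m/2) := by
    rw [le_div_iff₀ hx]
    calc Real.exp (m/2) * (1 - m/2) ≤ Real.exp (m/2) * Real.exp (-(m/2)) :=
          mul_le_mul_of_nonneg_left he (Real.exp_pos _).le
      _ = 1 := by rw [← Real.exp_add]; simp
  have h3 : 1/(1-m/2) ≤ 1 + u := by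
    rw [div_le_iff₀ hx]
    rcases min_choice u 1 with h | h <;> simp only [hm, h] <;> nlinarith
  have h4 : Real.exp (m/2) ≤ 1 + u := h2.trans h3
  have := (Real.le_log_iff_exp_le (by linarith : (0:ℝ) < 1 + u)).mpr h4
  linarith

private lemma psd_smul_vecMulVec {d : ℕ} (r : ℝ) (hr : 0 ≤ r) (v : Fin d → ℝ) :
    (r • vecMulVec v v).PosSemidef := by
  refine PosSemidef.of_dotProduct_mulVec_nonneg ?_ fun y => ?_
  · ext i j
    simp [conjTranspose_apply, vecMulVec_apply, mul_comm]
  · have : star y ⬝ᵥ (r • vecMulVec v v) *ᵥ y = r * ((v ⬝ᵥ y) * (v ⬝ᵥ y)) := by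
      simp only [star_trivial, dotProduct, mulVec, Matrix.smul_apply, vecMulVec_apply,
        smul_eq_mul, Finset.mul_sum, Finset.sum_mul]
      rw [Finset.sum_comm]
      exact Finset.sum_congr rfl fun i _ => Finset.sum_congr rfl fun j _ => by ring
    rw [this]
    exact mul_nonneg hr (mul_self_nonneg _)

private lemma det_step {d : ℕ} (A : Matrix (Fin d) (Fin d) ℝ) (hA : A.PosDef)
    (v : Fin d → ℝ) (r : ℝ) :
    (A + r • vecMulVec v v).det = A.det * (1 + r * (v ⬝ᵥ A⁻¹ *ᵥ v)) := by
  have hdet : A.det ≠ 0 := hA.det_pos.ne'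
  have h1 : A + r • vecMulVec v v = A * (1 + A⁻¹ * (r • vecMulVec v v)) := by
    rw [Matrix.mul_add, Matrix.mul_one, ← Matrix.mul_assoc,
      Matrix.mul_nonsing_inv _ (isUnit_iff_ne_zero.mpr hdet), Matrix.one_mul]
  have h2 : A⁻¹ * (r • vecMulVec v v) = vecMulVec (r • (A⁻¹ *ᵥ v)) v := by
    ext i j
    simp only [Matrix.mul_apply, Matrix.smul_apply, vecMulVec_apply, Pi.smul_apply,
      smul_eq_mul, Matrix.mulVec, dotProduct, Finset.mul_sum, Finset.sum_mul]
    exact Finset.sum_congr rfl fun k _ => by ring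
  rw [h1, Matrix.det_mul, h2, vecMulVec_eq Unit, det_one_add_replicateCol_mul_replicateRow]
  congr 1
  rw [dotProduct_smul, smul_eq_mul]

/-- Elliptical potential lemma for regularized Gram matrices. -/
theorem elliptical_potential
    {d : ℕ} (T : ℕ) (lam L : ℝ) (hlam : 1 ≤ lam)
    (c : ℕ → Fin d → ℝ) (x : ℕ → ℝ)
    (hx : ∀ t, x t = 0 ∨ x t = 1)
    (hc : ∀ t, Real.sqrt (c t ⬝ᵥ c t) ≤ L)
    (H : ℕ → Matrix (Fin d) (Fin d) ℝ)
    (hH : ∀ s, H s = lam • (1 : Matrix (Fin d) (Fin d) ℝ) +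
      ∑ t ∈ Finset.Icc 1 s, x t • vecMulVec (c t) (c t)) :
    ∑ t ∈ Finset.Icc 1 T, x t * min (c t ⬝ᵥ (H (t - 1))⁻¹.mulVec (c t)) 1 ≤
      2 * (Real.log (H T).det - Real.log (H 0).det) := by
  have hxnn : ∀ t, 0 ≤ x t := fun t => by rcases hx t with h | h <;> simp [h]
  have hPD : ∀ s, (H s).PosDef := by
    intro s
    rw [hH s]
    apply Matrix.PosDef.add_posSemidef
    · rw [smul_one_eq_diagonal]
      exact Matrix.PosDef.diagonal fun i => by linarith
    · exact Finset.sum_induction _ _ (fun a b ha hb => ha.add hb)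
        (Matrix.PosSemidef.zero) (fun t _ => psd_smul_vecMulVec _ (hxnn t) _)
  induction T with
  | zero => simp
  | succ T ih =>
    have hstep : H (T + 1) = H T + x (T + 1) • vecMulVec (c (T + 1)) (c (T + 1)) := by
      rw [hH, hH, Finset.sum_Icc_succ_top (Nat.succ_le_succ (Nat.zero_le T)), add_assoc]
    set u := c (T + 1) ⬝ᵥ (H T)⁻¹ *ᵥ (c (T + 1)) with hu_def
    have hu : 0 ≤ u := by
      simpa using ((hPD T).inv.posSemidef).dotProduct_mulVec_nonneg (c (T + 1))
    have hxu : 0 ≤ x (T + 1) * u := mul_nonneg (hxnn _) hu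
    have hdet : (H (T + 1)).det = (H T).det * (1 + x (T + 1) * u) := by
      rw [hstep, det_step _ (hPD T)]
    have hlog : Real.log (H (T + 1)).det
        = Real.log (H T).det + Real.log (1 + x (T + 1) * u) := by
      rw [hdet, Real.log_mul (hPD T).det_pos.ne' (by linarith)]
    have key : x (T + 1) * min u 1 ≤ 2 * Real.log (1 + x (T + 1) * u) := by
      rcases hx (T + 1) with h | h
      · simp [h]
      · rw [h, one_mul, one_mul]; exact min_le_two_log hu
    rw [Finset.sum_Icc_succ_top (Nat.succ_le_succ (Nat.zero_le T))]
    have hT1 : (T + 1 : ℕ) - 1 = T := rfl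
    rw [hT1]
    linarith
end

section
/- The divide-and-conquer algorithm that, for every candidate n_max ∈ {n : I_n = 1}, selects the k = min{m, Σ_n I_n} available clients with largest Z_n among those with τ̄_n ≤ τ̄_{n_max}, and returns the candidate solution with minimal objective, computes an exact optimizer of: minimize V·max_n{x_n τ̄_n} − Σ_n Z_n x_n subject to Σ_n x_n = min{m, Σ_n I_n}, x_n ≤ I_n, x_n ∈ {0,1}. -/
open Finset

lemma greedy_sum_le {α : Type*} [DecidableEq α] (S A B : Finset α) (Z : α → ℝ)
    (hA : A ⊆ S) (hB : B ⊆ S) (hcard : A.card = B.card)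
    (hgr : ∀ a ∈ B, ∀ b ∈ S \ B, Z b ≤ Z a) :
    ∑ n ∈ A, Z n ≤ ∑ n ∈ B, Z n := by
  have hcd : (A \ B).card = (B \ A).card := by
    have h1 := Finset.card_sdiff_add_card_inter A B
    have h2 := Finset.card_sdiff_add_card_inter B A
    rw [Finset.inter_comm] at h2
    omega
  have hdiff : ∑ n ∈ A \ B, Z n ≤ ∑ n ∈ B \ A, Z n := by
    rcases (B \ A).eq_empty_or_nonempty with he | hne
    · have : (A \ B) = ∅ := Finset.card_eq_zero.mp (by rw [hcd, he]; simp)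
      simp [this, he]
    · set c := (B \ A).inf' hne Z with hc
      have h1 : ∑ n ∈ A \ B, Z n ≤ (A \ B).card • c := by
        apply Finset.sum_le_card_nsmul
        intro a ha
        apply Finset.le_inf'
        intro b hb
        exact hgr b (Finset.sdiff_subset hb)
          a (Finset.mem_sdiff.mpr ⟨hA (Finset.mem_sdiff.mp ha).1,
            (Finset.mem_sdiff.mp ha).2⟩)
      have h2 : (B \ A).card • c ≤ ∑ n ∈ B \ A, Z n :=
        Finset.card_nsmul_le_sum _ _ _ (fun b hb => Finset.inf'_le _ hb)
      rw [hcd] at h1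
      exact h1.trans h2
  have hA' := Finset.sum_inter_add_sum_sdiff A B Z
  have hB' := Finset.sum_inter_add_sum_sdiff B A Z
  rw [Finset.inter_comm] at hB'
  linarith

/-- Objective of problem P4: `V · max_n (x_n τ̄_n) − Σ_{n ∈ A} Z_n`, where
the selection `A` is encoded as a finite set. -/
noncomputable def objP4 {N : ℕ} (hN : 0 < N) (V : ℝ) (τbar Z : Fin N → ℝ)
    (A : Finset (Fin N)) : ℝ :=
  V * (Finset.univ.sup' ⟨⟨0, hN⟩, Finset.mem_univ _⟩
    fun n => if n ∈ A then τbar n else 0) - ∑ n ∈ A, Z n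

/-- Correctness of the divide-and-conquer algorithm for P4: any candidate
family that, for every available `nmax` with enough qualified clients, picks
`k` qualified clients with largest backlogs, and any returned candidate of
minimal objective among those considered, yields an exact optimizer of P4. -/
theorem divide_and_conquer_optimal
    {N : ℕ} (hN : 0 < N) (m : ℕ) (V : ℝ) (hV : 0 ≤ V)
    (τbar Z : Fin N → ℝ) (hτ : ∀ n, 0 ≤ τbar n) (hZ : ∀ n, 0 ≤ Z n)
    (avail : Fin N → Bool)
    (havail : (Finset.univ.filter fun n => avail n = true).Nonempty)
    (hm : m ≤ N)
    (k : ℕ) (hk : k = min m (Finset.univ.filter fun n => avail n = true).card)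
    (cand : Fin N → Finset (Fin N))
    (hcand : ∀ nmax, avail nmax = true →
      k ≤ (Finset.univ.filter fun n => avail n = true ∧ τbar n ≤ τbar nmax).card →
      cand nmax ⊆ (Finset.univ.filter fun n => avail n = true ∧ τbar n ≤ τbar nmax) ∧
      (cand nmax).card = k ∧
      ∀ a ∈ cand nmax,
        ∀ b ∈ (Finset.univ.filter fun n => avail n = true ∧ τbar n ≤ τbar nmax) \
            cand nmax, Z b ≤ Z a)
    (best : Fin N) (hbestavail : avail best = true)
    (hbestq : k ≤ (Finset.univ.filter
      fun n => avail n = true ∧ τbar n ≤ τbar best).card)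
    (hbestmin : ∀ nmax, avail nmax = true →
      k ≤ (Finset.univ.filter fun n => avail n = true ∧ τbar n ≤ τbar nmax).card →
      objP4 hN V τbar Z (cand best) ≤ objP4 hN V τbar Z (cand nmax)) :
    (cand best).card = k ∧ (∀ n ∈ cand best, avail n = true) ∧
      ∀ A : Finset (Fin N), A.card = k → (∀ n ∈ A, avail n = true) →
        objP4 hN V τbar Z (cand best) ≤ objP4 hN V τbar Z A := by
  obtain ⟨hbsub, hbcard, hbgr⟩ := hcand best hbestavail hbestq
  refine ⟨hbcard, fun n hn => ((Finset.mem_filter.mp (hbsub hn)).2).1, ?_⟩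
  intro A hAcard hAavail
  rcases Nat.eq_zero_or_pos k with hk0 | hkpos
  · have hAe : A = ∅ := Finset.card_eq_zero.mp (hAcard.trans hk0)
    have hbe : cand best = ∅ := Finset.card_eq_zero.mp (hbcard.trans hk0)
    rw [hAe, hbe]
  · have hAne : A.Nonempty := Finset.card_pos.mp (hAcard ▸ hkpos)
    obtain ⟨nmax, hnA, hnmaxmax⟩ := A.exists_max_image τbar hAne
    have hnav : avail nmax = true := hAavail nmax hnA
    have hAsub : A ⊆ Finset.univ.filter
        fun n => avail n = true ∧ τbar n ≤ τbar nmax := by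
      intro n hn
      exact Finset.mem_filter.mpr ⟨Finset.mem_univ _,
        hAavail n hn, hnmaxmax n hn⟩
    have hcf : k ≤ (Finset.univ.filter
        fun n => avail n = true ∧ τbar n ≤ τbar nmax).card := by
      calc k = A.card := hAcard.symm
        _ ≤ _ := Finset.card_le_card hAsub
    obtain ⟨hsub', hcard', hgr'⟩ := hcand nmax hnav hcf
    refine (hbestmin nmax hnav hcf).trans ?_
    unfold objP4
    have hsum : ∑ n ∈ A, Z n ≤ ∑ n ∈ cand nmax, Z n :=
      greedy_sum_le _ A (cand nmax) Z hAsub hsub'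
        (hAcard.trans hcard'.symm) hgr'
    have hsup1 : (Finset.univ.sup' ⟨⟨0, hN⟩, Finset.mem_univ _⟩
        fun n => if n ∈ cand nmax then τbar n else 0) ≤ τbar nmax := by
      apply Finset.sup'_le
      intro n _
      split_ifs with h
      · exact (Finset.mem_filter.mp (hsub' h)).2.2
      · exact hτ nmax
    have hsup2 : τbar nmax ≤ (Finset.univ.sup' ⟨⟨0, hN⟩, Finset.mem_univ _⟩
        fun n => if n ∈ A then τbar n else 0) := by
      have := Finset.le_sup' (f := fun n => if n ∈ A then τbar n else 0)
        (Finset.mem_univ nmax)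
      rwa [if_pos hnA] at this
    have := mul_le_mul_of_nonneg_left (hsup1.trans hsup2) hV
    linarith
end
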